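/- Under the construction setup, let s ∈ F[x,y], let β ∈ Z_f and γ ∈ Z_g, and suppose that (x − β) divides s in F[x,y] and (y − γ) divides s in F[x,y]. Then (x − (β + γ))² divides the univariate polynomial s(g(x), f(x)) in F[x]. -/

import Mathlib

open Polynomial
open scoped Classical

/-- Under the construction setup, let `s ∈ F[x,y]`, `β ∈ Z_f`,
`γ ∈ Z_g`, and suppose `(x − β) ∣ s` and `(y − γ) ∣ s` in `F[x,y]`.  Then
`(x − (β + γ))²` divides the univariate polynomial `s(g(x), f(x))` in `F[x]`. -/
theorem stmt_10 (p e : ℕ) (hp : p.Prime) (he : 0 < e)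
    (F : Type*) [Field F] [Fintype F] [CharP F p]
    (f : F[X])
    (hflin : ∀ m ∈ f.support, ∃ i : ℕ, m = (p ^ e) ^ i)
    (hdeg : 1 < f.natDegree)
    (ha0 : f.coeff 1 ≠ 0) (ha1 : f.coeff 1 ≠ 1)
    (g : F[X]) (hg : g = X - f)
    (hfs : (f.map (RingHom.id F)).Splits) (hgs : (g.map (RingHom.id F)).Splits)
    (s : MvPolynomial (Fin 2) F) (β γ : F)
    (hβ : β ∈ f.roots.toFinset) (hγ : γ ∈ g.roots.toFinset)
    (hdvd₁ : (MvPolynomial.X 0 - MvPolynomial.C β) ∣ s)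
    (hdvd₂ : (MvPolynomial.X 1 - MvPolynomial.C γ) ∣ s) :
    (X - C (β + γ)) ^ 2 ∣ (MvPolynomial.aeval ![g, f] s : F[X]) := by
  haveI := Fact.mk hp
  rw [Multiset.mem_toFinset, mem_roots'] at hβ hγ
  have hfβ : f.eval β = 0 := hβ.2
  have hfγ : f.eval γ = γ := by
    have h2 := hγ.2
    rw [hg] at h2
    have : γ - f.eval γ = 0 := by simpa [IsRoot] using h2
    exact (sub_eq_zero.mp this).symm
  -- additivity of f on β, γ
  have hadd : f.eval (β + γ) = f.eval β + f.eval γ := by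
    rw [eval_eq_sum, eval_eq_sum, eval_eq_sum, Polynomial.sum_def,
      Polynomial.sum_def, Polynomial.sum_def, ← Finset.sum_add_distrib]
    refine Finset.sum_congr rfl fun m hm => ?_
    obtain ⟨i, rfl⟩ := hflin m hm
    rw [← pow_mul, add_pow_char_pow, mul_add]
  have hfc : f.eval (β + γ) = γ := by rw [hadd, hfβ, hfγ, zero_add]
  have hgc : g.eval (β + γ) = β := by
    rw [hg]; simp [hfc]
  obtain ⟨a, ha⟩ := hdvd₁
  obtain ⟨b, hb⟩ := hdvd₂
  set v : Fin 2 → F := ![β, γ] with hv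
  -- a(β, γ) = 0 via partial derivative in x₀
  have heq : (MvPolynomial.X 0 - MvPolynomial.C β) * a
      = (MvPolynomial.X 1 - MvPolynomial.C γ) * b := ha.symm.trans hb
  have hpd := congrArg (MvPolynomial.eval v)
    (congrArg (MvPolynomial.pderiv 0) heq)
  simp [MvPolynomial.pderiv_mul, MvPolynomial.pderiv_X, Pi.single_apply, hv] at hpd
  -- evaluation of aeval ![g,f] t at β+γ equals eval of t at (β,γ)
  have key : ∀ t : MvPolynomial (Fin 2) F,
      Polynomial.eval (β + γ) (MvPolynomial.aeval ![g, f] t : F[X])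
        = MvPolynomial.eval v t := by
    intro t
    induction t using MvPolynomial.induction_on with
    | C c => simp
    | add q r hq hr => simp [hq, hr]
    | mul_X q i hq =>
      fin_cases i <;> simp [hq, hgc, hfc, hv]
  have hA : (X - C (β + γ)) ∣ (MvPolynomial.aeval ![g, f] a : F[X]) := by
    rw [dvd_iff_isRoot]
    exact (key a).trans hpd
  have hG : (X - C (β + γ)) ∣ (g - C β) := by
    rw [dvd_iff_isRoot]
    simp [IsRoot, hgc]
  have hfac : (MvPolynomial.aeval ![g, f] s : F[X])
      = (g - C β) * (MvPolynomial.aeval ![g, f] a : F[X]) := by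
    rw [ha, map_mul, map_sub, MvPolynomial.aeval_X, MvPolynomial.aeval_C]
    simp
  rw [hfac, sq]
  exact mul_dvd_mul hG hA
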